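/- Let m ≥ 2 be an integer that is not a power of 2. Then there is a 2-coloring (Red/Blue) of the m-element subsets of a 2m-element set such that (i) complementary m-sets receive distinct colors, and (ii) every point of the 2m-set is contained in equally many Red and Blue m-sets. -/

import Mathlib

/- Auxiliary development for stmt_18.
   Construction: let w be the odd part of m (w ≥ 3 since m is not a power of 2).
   For A ⊆ Fin (2m), consider its residue profile ν x = #(A ∩ {a : a ≡ x mod w}).
   Encode rotations of the profile as numbers (base 2m+1) and let M A be the max.
   M A = M Aᶜ iff A is "balanced" (all classes have m/w elements).
   Color: unbalanced A by comparing M A with M Aᶜ (rotation-invariant, so the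
   red/blue unbalanced families are shift-invariant, giving uniform coverage);
   balanced A by parity of #(A ∩ [0,w)), flipped by complement (w odd) and by
   the involution "toggle the whole class (i%w)+1", giving per-point balance. -/

namespace Stmt18Aux

open Finset

/-- digit uniqueness for base-B expansions -/
private lemma digits_inj (B : ℕ) : ∀ (n : ℕ) (f g : ℕ → ℕ),
    (∀ x, x < n → f x < B) → (∀ x, x < n → g x < B) →
    (∑ x ∈ Finset.range n, f x * B^x) = (∑ x ∈ Finset.range n, g x * B^x) →
    ∀ x, x < n → f x = g x := by
  intro n
  induction n with
  | zero => intro f g _ _ _ x hx; omega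
  | succ n ih =>
    intro f g hf hg hsum x hx
    have hB : 0 < B := lt_of_le_of_lt (Nat.zero_le _) (hf 0 (Nat.succ_pos n))
    have expand : ∀ h : ℕ → ℕ, ∑ y ∈ Finset.range (n+1), h y * B^y
        = h 0 + (∑ y ∈ Finset.range n, h (y+1) * B^y) * B := by
      intro h
      rw [Finset.sum_range_succ' (fun y => h y * B^y) n]
      simp only [pow_zero, mul_one, Finset.sum_mul]
      have : ∀ k, h (k+1) * B^(k+1) = h (k+1) * B^k * B := by
        intro k; rw [pow_succ, mul_assoc]
      simp only [this]
      rw [add_comm]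
    rw [expand f, expand g] at hsum
    set F := ∑ y ∈ Finset.range n, f (y+1) * B^y with hF
    set G := ∑ y ∈ Finset.range n, g (y+1) * B^y with hG
    have h0 : f 0 = g 0 := by
      have e1 : (f 0 + F * B) % B = f 0 := by
        rw [Nat.add_mul_mod_self_right, Nat.mod_eq_of_lt (hf 0 (by omega))]
      have e2 : (g 0 + G * B) % B = g 0 := by
        rw [Nat.add_mul_mod_self_right, Nat.mod_eq_of_lt (hg 0 (by omega))]
      rw [← e1, ← e2, hsum]
    have hFG : F = G := by
      have hmul : F * B = G * B := by omega
      exact Nat.eq_of_mul_eq_mul_right hB hmul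
    have hrec := ih (fun y => f (y+1)) (fun y => g (y+1))
      (fun y hy => hf (y+1) (by omega)) (fun y hy => hg (y+1) (by omega)) hFG
    rcases x with _ | y
    · exact h0
    · exact hrec y (by omega)

/-- rotation compatibility of residues -/
private lemma mod_rot {w : ℕ} (hw1 : 1 < w) {x : ℕ} (hx : x < w) (c : ℕ) :
    (c + 1) % w = x ↔ c % w = (x + (w-1)) % w := by
  have h0 : 0 < w := by omega
  have hc : c % w < w := Nat.mod_lt _ h0
  have e1 : (c + 1) % w = (c % w + 1) % w := by
    conv_lhs => rw [← Nat.mod_add_mod]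
  by_cases hcw : c % w + 1 = w
  · rw [e1, hcw, Nat.mod_self]
    constructor
    · intro h
      rw [← h, Nat.zero_add, Nat.mod_eq_of_lt (show w - 1 < w by omega)]
      omega
    · intro h
      rcases Nat.eq_zero_or_pos x with h0x | h1x
      · omega
      · exfalso
        have e3 : x + (w-1) = w + (x-1) := by omega
        rw [e3, Nat.add_mod_left, Nat.mod_eq_of_lt (show x - 1 < w by omega)] at h
        omega
  · have e2 : (c+1) % w = c % w + 1 := by
      rw [e1]; exact Nat.mod_eq_of_lt (by omega)
    rcases Nat.eq_zero_or_pos x with h0x | h1x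
    · subst h0x
      rw [e2, Nat.zero_add, Nat.mod_eq_of_lt (show w - 1 < w by omega)]
      omega
    · have e3 : (x + (w-1)) % w = x - 1 := by
        have e4 : x + (w-1) = w + (x-1) := by omega
        rw [e4, Nat.add_mod_left, Nat.mod_eq_of_lt (show x - 1 < w by omega)]
      rw [e2, e3]; omega

private lemma filt_split {n : ℕ} (P : Fin n → Prop) [DecidablePred P] (A : Finset (Fin n)) :
    (A.filter P).card + (Aᶜ.filter P).card = (Finset.univ.filter P).card := by
  rw [← Finset.card_union_of_disjoint]
  · congr 1; ext a
    simp only [Finset.mem_union, Finset.mem_filter, Finset.mem_compl, Finset.mem_univ, true_and]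
    tauto
  · rw [Finset.disjoint_left]
    intro a ha hb
    simp only [Finset.mem_filter, Finset.mem_compl] at ha hb
    tauto

private lemma card_class (m w : ℕ) (hm : 0 < m) (hw : 0 < w) (hdvd : w ∣ 2*m)
    {x : ℕ} (hx : x < w) :
    (Finset.univ.filter (fun a : Fin (2*m) => a.val % w = x)).card = 2*m / w := by
  have h2m : 0 < 2*m := by omega
  have hKw : (2*m/w) * w = 2*m := Nat.div_mul_cancel hdvd
  have key : (Finset.univ.filter (fun a : Fin (2*m) => a.val % w = x)).card
      = (Finset.range (2*m/w)).card := by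
    refine Finset.card_bij' (fun a _ => a.val / w)
      (fun k _ => (⟨(x + k * w) % (2*m), Nat.mod_lt _ h2m⟩ : Fin (2*m))) ?_ ?_ ?_ ?_
    · intro a ha
      simp only [Finset.mem_filter, Finset.mem_univ, true_and] at ha
      exact Finset.mem_range.2 (Nat.div_lt_div_of_lt_of_dvd hdvd a.isLt)
    · intro k hk
      have hk' : k < 2*m/w := Finset.mem_range.1 hk
      have hlt : x + k * w < 2*m := by
        have h1 : (k+1) * w ≤ (2*m/w) * w := Nat.mul_le_mul_right _ (by omega)
        have h2 : (k+1) * w = k * w + w := by ring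
        omega
      simp only [Finset.mem_filter, Finset.mem_univ, true_and]
      rw [Nat.mod_eq_of_lt hlt, Nat.add_mul_mod_self_right, Nat.mod_eq_of_lt hx]
    · intro a ha
      simp only [Finset.mem_filter, Finset.mem_univ, true_and] at ha
      apply Fin.ext
      simp only
      have h5 : x + a.val / w * w = a.val := by
        rw [← ha]; exact Nat.mod_add_div' a.val w
      rw [h5, Nat.mod_eq_of_lt a.isLt]
    · intro k hk
      have hk' : k < 2*m/w := Finset.mem_range.1 hk
      have hlt : x + k * w < 2*m := by
        have h1 : (k+1) * w ≤ (2*m/w) * w := Nat.mul_le_mul_right _ (by omega)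
        have h2 : (k+1) * w = k * w + w := by ring
        omega
      simp only [Nat.mod_eq_of_lt hlt]
      rw [Nat.add_mul_div_right _ _ hw, Nat.div_eq_of_lt hx, Nat.zero_add]
  rw [key, Finset.card_range]

private lemma card_repset (m w : ℕ) (hm : 0 < m) (hwm : w ≤ 2*m) :
    (Finset.univ.filter (fun a : Fin (2*m) => a.val < w)).card = w := by
  have h2m : 0 < 2*m := by omega
  have key : (Finset.univ.filter (fun a : Fin (2*m) => a.val < w)).card
      = (Finset.range w).card := by
    refine Finset.card_bij' (fun a _ => a.val)
      (fun k _ => (⟨k % (2*m), Nat.mod_lt _ h2m⟩ : Fin (2*m))) ?_ ?_ ?_ ?_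
    · intro a ha
      simp only [Finset.mem_filter, Finset.mem_univ, true_and] at ha
      exact Finset.mem_range.2 ha
    · intro k hk
      have hk' : k < w := Finset.mem_range.1 hk
      simp only [Finset.mem_filter, Finset.mem_univ, true_and]
      rw [Nat.mod_eq_of_lt (show k < 2*m by omega)]
      exact hk'
    · intro a ha
      apply Fin.ext
      simp only
      exact Nat.mod_eq_of_lt a.isLt
    · intro k hk
      have hk' : k < w := Finset.mem_range.1 hk
      simp only
      exact Nat.mod_eq_of_lt (show k < 2*m by omega)
  rw [key, Finset.card_range]

/-! ### Main definitions -/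

def ν (m w : ℕ) (A : Finset (Fin (2*m))) (x : ℕ) : ℕ :=
  (A.filter (fun a => a.val % w = x)).card

def code (m w : ℕ) (A : Finset (Fin (2*m))) (j : ℕ) : ℕ :=
  ∑ x ∈ Finset.range w, ν m w A ((x + j) % w) * (2*m+1)^x

def M (m w : ℕ) (A : Finset (Fin (2*m))) : ℕ :=
  (Finset.range w).sup (code m w A)

def Bal (m w : ℕ) (A : Finset (Fin (2*m))) : Prop :=
  ∀ x, x < w → ν m w A x = m / w

instance (m w : ℕ) (A : Finset (Fin (2*m))) : Decidable (Bal m w A) := by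
  unfold Bal; infer_instance

def rep (m w : ℕ) (A : Finset (Fin (2*m))) : ℕ :=
  (A.filter (fun a => a.val < w)).card

def col (m w : ℕ) (A : Finset (Fin (2*m))) : Bool :=
  if M m w A = M m w Aᶜ then decide (Odd (rep m w A)) else decide (M m w Aᶜ < M m w A)

/-! ### Basic profile lemmas -/

lemma nu_le (m w : ℕ) (A : Finset (Fin (2*m))) (x : ℕ) : ν m w A x ≤ 2*m := by
  unfold ν
  calc (A.filter _).card ≤ A.card := Finset.card_filter_le _ _
    _ ≤ Finset.univ.card := Finset.card_le_univ _
    _ = 2*m := by simp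

lemma nu_add_compl (m w : ℕ) (hm : 0 < m) (hw : 0 < w) (hdvd : w ∣ 2*m)
    (A : Finset (Fin (2*m))) {x : ℕ} (hx : x < w) :
    ν m w A x + ν m w Aᶜ x = 2*m/w := by
  unfold ν
  rw [filt_split]
  exact card_class m w hm hw hdvd hx

lemma two_mu (m w : ℕ) (hw : 0 < w) (hdvd : w ∣ m) : 2*m/w = 2*(m/w) := by
  have hμ : w * (m/w) = m := Nat.mul_div_cancel' hdvd
  have h2 : 2*m = w * (2*(m/w)) := by
    conv_lhs => rw [← hμ]
    ring
  rw [h2, Nat.mul_div_cancel_left _ hw]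

lemma bal_compl_iff (m w : ℕ) (hm : 0 < m) (hw : 0 < w) (hdvdm : w ∣ m)
    (A : Finset (Fin (2*m))) : Bal m w Aᶜ ↔ Bal m w A := by
  have hdvd : w ∣ 2*m := Dvd.dvd.mul_left hdvdm 2
  constructor
  · intro h x hx
    have h1 := nu_add_compl m w hm hw hdvd A hx
    have h2 := h x hx
    have h3 := two_mu m w hw hdvdm
    omega
  · intro h x hx
    have h1 := nu_add_compl m w hm hw hdvd A hx
    have h2 := h x hx
    have h3 := two_mu m w hw hdvdm
    omega

/-! ### M and balancedness -/

lemma code_eq_of_bal (m w : ℕ) (hm : 0 < m) (hw : 0 < w) (hdvdm : w ∣ m)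
    (A : Finset (Fin (2*m))) (hbal : Bal m w A) (j : ℕ) :
    code m w A j = code m w Aᶜ j := by
  have hdvd : w ∣ 2*m := Dvd.dvd.mul_left hdvdm 2
  unfold code
  apply Finset.sum_congr rfl
  intro x hx
  congr 1
  have hlt : (x + j) % w < w := Nat.mod_lt _ hw
  have h1 := nu_add_compl m w hm hw hdvd A hlt
  have h2 := hbal _ hlt
  have h3 := two_mu m w hw hdvdm
  omega

lemma M_eq_of_bal (m w : ℕ) (hm : 0 < m) (hw : 0 < w) (hdvdm : w ∣ m)
    (A : Finset (Fin (2*m))) (hbal : Bal m w A) : M m w A = M m w Aᶜ := by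
  unfold M
  exact Finset.sup_congr rfl (fun j _ => code_eq_of_bal m w hm hw hdvdm A hbal j)

lemma bal_of_M_eq (m w : ℕ) (hm : 0 < m) (hw1 : 1 < w) (hodd : w % 2 = 1) (hdvdm : w ∣ m)
    (A : Finset (Fin (2*m))) (hM : M m w A = M m w Aᶜ) : Bal m w A := by
  have hw : 0 < w := by omega
  have hdvd : w ∣ 2*m := Dvd.dvd.mul_left hdvdm 2
  obtain ⟨j, hj, hjE⟩ := Finset.exists_mem_eq_sup (Finset.range w)
    ⟨0, Finset.mem_range.2 hw⟩ (code m w A)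
  obtain ⟨k, hk, hkE⟩ := Finset.exists_mem_eq_sup (Finset.range w)
    ⟨0, Finset.mem_range.2 hw⟩ (code m w Aᶜ)
  have hj' : j < w := Finset.mem_range.1 hj
  have hcode : code m w A j = code m w Aᶜ k := by
    rw [← hjE, ← hkE]; exact hM
  have hd : ∀ x, x < w → ν m w A ((x+j)%w) = ν m w Aᶜ ((x+k)%w) := by
    apply digits_inj (2*m+1) w
    · intro x _; exact lt_of_le_of_lt (nu_le m w A _) (by omega)
    · intro x _; exact lt_of_le_of_lt (nu_le m w Aᶜ _) (by omega)
    · exact hcode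
  set t := (w - j) + k with ht
  have step0 : ∀ y, y < w → ν m w A y = ν m w Aᶜ ((y + t) % w) := by
    intro y hy
    have hx : (y + (w - j)) % w < w := Nat.mod_lt _ hw
    have h1 := hd ((y + (w-j)) % w) hx
    have e1 : ((y + (w-j))%w + j)%w = y := by
      rw [Nat.mod_add_mod]
      have : y + (w-j) + j = y + w := by omega
      rw [this, Nat.add_mod_right, Nat.mod_eq_of_lt hy]
    have e2 : ((y + (w-j))%w + k)%w = (y + t) % w := by
      rw [Nat.mod_add_mod, ht, ← Nat.add_assoc]
    rw [e1, e2] at h1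
    exact h1
  have step1 : ∀ y, y < w → ν m w A y + ν m w A ((y+t)%w) = 2*m/w := by
    intro y hy
    have hz : (y+t) % w < w := Nat.mod_lt _ hw
    have h1 := nu_add_compl m w hm hw hdvd A hz
    have h2 := step0 y hy
    omega
  have step2 : ∀ y, y < w → ν m w A ((y + 2*t)%w) = ν m w A y := by
    intro y hy
    have hz : (y+t) % w < w := Nat.mod_lt _ hw
    have h1 := step1 y hy
    have h2 := step1 ((y+t)%w) hz
    have e : ((y+t)%w + t)%w = (y + 2*t)%w := by
      rw [Nat.mod_add_mod]
      congr 1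
      omega
    rw [e] at h2
    omega
  have step3 : ∀ s y, y < w → ν m w A ((y + 2*t*s)%w) = ν m w A y := by
    intro s
    induction s with
    | zero => intro y hy; simp [Nat.mod_eq_of_lt hy]
    | succ s ihs =>
      intro y hy
      have e : y + 2*t*(s+1) = (y + 2*t) + 2*t*s := by ring
      rw [e]
      have hz : (y + 2*t) % w < w := Nat.mod_lt _ hw
      have e2 : ((y + 2*t)%w + 2*t*s) % w = (y + 2*t + 2*t*s) % w := Nat.mod_add_mod _ _ _
      rw [← e2, ihs _ hz]
      exact step2 y hy
  have final : ∀ y, y < w → ν m w A ((y + t)%w) = ν m w A y := by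
    intro y hy
    have h2s : 2 * ((w+1)/2) = w + 1 := by omega
    have e : 2*t*((w+1)/2) = (y + t) + t*w - y := by
      have : 2*t*((w+1)/2) = t * (2 * ((w+1)/2)) := by ring
      rw [this, h2s]
      have : t * (w+1) = t*w + t := by ring
      omega
    have h3 := step3 ((w+1)/2) y hy
    have e2 : y + 2*t*((w+1)/2) = (y + t) + t*w := by omega
    rw [e2, Nat.add_mul_mod_self_right] at h3
    exact h3
  intro y hy
  have h1 := step1 y hy
  have h2 := final y hy
  have h3 := two_mu m w hw hdvdm
  omega

/-! ### col basics -/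

lemma rep_add_compl (m w : ℕ) (hm : 0 < m) (hwm : w ≤ 2*m) (A : Finset (Fin (2*m))) :
    rep m w A + rep m w Aᶜ = w := by
  unfold rep
  rw [filt_split]
  exact card_repset m w hm hwm

lemma col_compl_ne (m w : ℕ) (hm : 0 < m) (hw1 : 1 < w) (hodd : w % 2 = 1)
    (hdvdm : w ∣ m) (A : Finset (Fin (2*m))) : col m w Aᶜ ≠ col m w A := by
  have hw : 0 < w := by omega
  have hwm : w ≤ 2*m := le_trans (Nat.le_of_dvd hm hdvdm) (by omega)
  unfold col
  by_cases h : M m w A = M m w Aᶜ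
  · rw [if_pos h, if_pos (by rw [compl_compl]; exact h.symm)]
    have hsum := rep_add_compl m w hm hwm A
    rw [ne_eq, decide_eq_decide]
    rw [Nat.odd_iff, Nat.odd_iff]
    omega
  · rw [if_neg h, if_neg (by rw [compl_compl]; exact fun e => h e.symm)]
    rw [compl_compl]
    rcases lt_or_gt_of_ne h with h1 | h1
    · simp [h1, not_lt.2 h1.le]
    · simp [h1, not_lt.2 h1.le]

lemma bool_ne_iff_not (a b : Bool) (h : a ≠ b) : a = !b := by
  cases a <;> cases b <;> simp_all

lemma col_compl (m w : ℕ) (hm : 0 < m) (hw1 : 1 < w) (hodd : w % 2 = 1)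
    (hdvdm : w ∣ m) (A : Finset (Fin (2*m))) : col m w Aᶜ = !(col m w A) :=
  bool_ne_iff_not _ _ (col_compl_ne m w hm hw1 hodd hdvdm A)

lemma col_bal (m w : ℕ) (hm : 0 < m) (hw : 0 < w) (hdvdm : w ∣ m)
    (A : Finset (Fin (2*m))) (hbal : Bal m w A) :
    col m w A = decide (Odd (rep m w A)) := by
  unfold col
  rw [if_pos (M_eq_of_bal m w hm hw hdvdm A hbal)]


/-! ### Shift machinery -/

def shift (m : ℕ) [NeZero (2*m)] (A : Finset (Fin (2*m))) : Finset (Fin (2*m)) :=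
  A.image (fun a => a + 1)

lemma val_shift (m w : ℕ) [NeZero (2*m)] (hm : 0 < m) (hdvd : w ∣ 2*m) (a : Fin (2*m)) :
    ((a + 1 : Fin (2*m)).val) % w = (a.val + 1) % w := by
  have h1 : ((1 : Fin (2*m))).val = 1 := by
    rw [Fin.val_one']
    exact Nat.mod_eq_of_lt (by omega)
  rw [Fin.val_add, h1, Nat.mod_mod_of_dvd _ hdvd]

lemma card_shift (m : ℕ) [NeZero (2*m)] (A : Finset (Fin (2*m))) :
    (shift m A).card = A.card :=
  Finset.card_image_of_injective _ (add_left_injective 1)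

lemma mem_shift (m : ℕ) [NeZero (2*m)] (A : Finset (Fin (2*m))) (i : Fin (2*m)) :
    i + 1 ∈ shift m A ↔ i ∈ A := by
  unfold shift
  rw [Finset.mem_image]
  constructor
  · rintro ⟨a, ha, h⟩
    have : a = i := add_left_injective 1 h
    rwa [← this]
  · intro hi
    exact ⟨i, hi, rfl⟩

lemma shift_compl (m : ℕ) [NeZero (2*m)] (A : Finset (Fin (2*m))) :
    (shift m A)ᶜ = shift m Aᶜ := by
  ext b
  simp only [Finset.mem_compl, shift, Finset.mem_image]
  constructor
  · intro hb
    refine ⟨b - 1, ?_, by rw [sub_add_cancel]⟩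
    intro hmem
    exact hb ⟨b - 1, hmem, by rw [sub_add_cancel]⟩
  · rintro ⟨a, ha, rfl⟩ ⟨a', ha', hEq⟩
    have : a' = a := add_left_injective 1 hEq
    rw [this] at ha'
    exact ha ha'

lemma nu_shift (m w : ℕ) [NeZero (2*m)] (hm : 0 < m) (hw1 : 1 < w) (hdvd : w ∣ 2*m)
    (A : Finset (Fin (2*m))) {x : ℕ} (hx : x < w) :
    ν m w (shift m A) x = ν m w A ((x + (w-1)) % w) := by
  unfold ν shift
  rw [Finset.filter_image, Finset.card_image_of_injective _ (add_left_injective 1)]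
  congr 1
  apply Finset.filter_congr
  intro a _
  rw [val_shift m w hm hdvd a]
  exact mod_rot hw1 hx a.val

lemma code_mod (m w : ℕ) (A : Finset (Fin (2*m))) (j : ℕ) :
    code m w A j = code m w A (j % w) := by
  unfold code
  apply Finset.sum_congr rfl
  intro x _
  congr 2
  exact ((Nat.mod_modEq j w).add_left x).symm

lemma code_shift (m w : ℕ) [NeZero (2*m)] (hm : 0 < m) (hw1 : 1 < w) (hdvd : w ∣ 2*m)
    (A : Finset (Fin (2*m))) (j : ℕ) :
    code m w (shift m A) j = code m w A (j + (w-1)) := by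
  have hw : 0 < w := by omega
  unfold code
  apply Finset.sum_congr rfl
  intro x hx
  rw [nu_shift m w hm hw1 hdvd A (Nat.mod_lt _ hw)]
  congr 2
  rw [Nat.mod_add_mod, Nat.add_assoc]

lemma M_shift (m w : ℕ) [NeZero (2*m)] (hm : 0 < m) (hw1 : 1 < w) (hdvd : w ∣ 2*m)
    (A : Finset (Fin (2*m))) : M m w (shift m A) = M m w A := by
  have hw : 0 < w := by omega
  unfold M
  apply le_antisymm
  · apply Finset.sup_le
    intro j _
    rw [code_shift m w hm hw1 hdvd, code_mod]
    exact Finset.le_sup (Finset.mem_range.2 (Nat.mod_lt _ hw))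
  · apply Finset.sup_le
    intro j hj
    have hj' : j < w := Finset.mem_range.1 hj
    have e : code m w (shift m A) ((j+1) % w) = code m w A j := by
      rw [code_shift m w hm hw1 hdvd, code_mod, Nat.mod_add_mod]
      have e1 : j + 1 + (w-1) = j + w := by omega
      rw [e1, Nat.add_mod_right, Nat.mod_eq_of_lt hj']
    rw [← e]
    exact Finset.le_sup (Finset.mem_range.2 (Nat.mod_lt _ hw))

lemma bal_shift (m w : ℕ) [NeZero (2*m)] (hm : 0 < m) (hw1 : 1 < w) (hdvd : w ∣ 2*m)
    (A : Finset (Fin (2*m))) : Bal m w (shift m A) ↔ Bal m w A := by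
  have hw : 0 < w := by omega
  constructor
  · intro h y hy
    have h1 := h ((y+1) % w) (Nat.mod_lt _ hw)
    rw [nu_shift m w hm hw1 hdvd A (Nat.mod_lt _ hw)] at h1
    have e : ((y+1)%w + (w-1)) % w = y := by
      rw [Nat.mod_add_mod]
      have e1 : y + 1 + (w-1) = y + w := by omega
      rw [e1, Nat.add_mod_right, Nat.mod_eq_of_lt hy]
    rwa [e] at h1
  · intro h x hx
    rw [nu_shift m w hm hw1 hdvd A hx]
    exact h _ (Nat.mod_lt _ hw)

lemma col_shift (m w : ℕ) [NeZero (2*m)] (hm : 0 < m) (hw1 : 1 < w) (hodd : w % 2 = 1)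
    (hdvdm : w ∣ m) (A : Finset (Fin (2*m))) (hnb : ¬ Bal m w A) :
    col m w (shift m A) = col m w A := by
  have hdvd : w ∣ 2*m := Dvd.dvd.mul_left hdvdm 2
  have hMne : M m w A ≠ M m w Aᶜ := by
    intro h
    exact hnb (bal_of_M_eq m w hm hw1 hodd hdvdm A h)
  have h1 : M m w (shift m A) = M m w A := M_shift m w hm hw1 hdvd A
  have h2 : M m w (shift m A)ᶜ = M m w Aᶜ := by
    rw [shift_compl]
    exact M_shift m w hm hw1 hdvd Aᶜ
  unfold col
  rw [h1, h2, if_neg hMne, if_neg hMne]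

/-! ### Flip machinery (balanced sets) -/

def Ct (m w t : ℕ) : Finset (Fin (2*m)) :=
  Finset.univ.filter (fun a => a.val % w = t)

def flipC (m w t : ℕ) (A : Finset (Fin (2*m))) : Finset (Fin (2*m)) :=
  (A \ Ct m w t) ∪ (Ct m w t \ A)

lemma mem_flip (m w t : ℕ) (A : Finset (Fin (2*m))) (a : Fin (2*m)) :
    a ∈ flipC m w t A ↔ ((a ∈ A ∧ a ∉ Ct m w t) ∨ (a ∈ Ct m w t ∧ a ∉ A)) := by
  unfold flipC
  simp [Finset.mem_union, Finset.mem_sdiff]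

lemma flip_flip (m w t : ℕ) (A : Finset (Fin (2*m))) :
    flipC m w t (flipC m w t A) = A := by
  ext a
  rw [mem_flip, mem_flip]
  tauto

lemma filter_flip_ne (m w t : ℕ) (A : Finset (Fin (2*m))) {x : ℕ} (hxt : x ≠ t) :
    (flipC m w t A).filter (fun a => a.val % w = x) = A.filter (fun a => a.val % w = x) := by
  ext a
  simp only [Finset.mem_filter, mem_flip]
  constructor
  · rintro ⟨h1, h2⟩
    refine ⟨?_, h2⟩
    rcases h1 with ⟨hA, _⟩ | ⟨hC, _⟩
    · exact hA
    · exfalso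
      simp only [Ct, Finset.mem_filter, Finset.mem_univ, true_and] at hC
      rw [h2] at hC
      exact hxt hC
  · rintro ⟨h1, h2⟩
    refine ⟨Or.inl ⟨h1, ?_⟩, h2⟩
    simp only [Ct, Finset.mem_filter, Finset.mem_univ, true_and]
    intro h
    rw [h2] at h
    exact hxt h

lemma filter_flip_eq (m w t : ℕ) (A : Finset (Fin (2*m))) :
    (flipC m w t A).filter (fun a => a.val % w = t) = Ct m w t \ A := by
  ext a
  simp only [Finset.mem_filter, mem_flip, Finset.mem_sdiff]
  constructor
  · rintro ⟨h1, h2⟩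
    rcases h1 with ⟨hA, hC⟩ | ⟨hC, hA⟩
    · exfalso
      apply hC
      simp only [Ct, Finset.mem_filter, Finset.mem_univ, true_and]
      exact h2
    · exact ⟨hC, hA⟩
  · rintro ⟨hC, hA⟩
    have h2 : a.val % w = t := by
      simpa only [Ct, Finset.mem_filter, Finset.mem_univ, true_and] using hC
    exact ⟨Or.inr ⟨hC, hA⟩, h2⟩

lemma inter_ct (m w t : ℕ) (A : Finset (Fin (2*m))) :
    Ct m w t ∩ A = A.filter (fun a => a.val % w = t) := by
  ext a
  simp only [Finset.mem_inter, Finset.mem_filter, Ct, Finset.mem_univ, true_and]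
  tauto

lemma nu_flip (m w t : ℕ) (hw : 0 < w) (ht : t < w) (hm : 0 < m) (hdvd : w ∣ 2*m)
    (A : Finset (Fin (2*m))) {x : ℕ} (hx : x < w) :
    ν m w (flipC m w t A) x = if x = t then 2*m/w - ν m w A t else ν m w A x := by
  by_cases hxt : x = t
  · rw [if_pos hxt, hxt]
    unfold ν
    rw [filter_flip_eq]
    have h1 := Finset.card_sdiff_add_card_inter (Ct m w t) A
    rw [inter_ct] at h1
    have h2 : (Ct m w t).card = 2*m/w := card_class m w hm hw hdvd ht
    omega
  · rw [if_neg hxt]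
    unfold ν
    rw [filter_flip_ne m w t A hxt]

lemma bal_flip (m w t : ℕ) (hw : 0 < w) (ht : t < w) (hm : 0 < m) (hdvdm : w ∣ m)
    (A : Finset (Fin (2*m))) (hbal : Bal m w A) : Bal m w (flipC m w t A) := by
  have hdvd : w ∣ 2*m := Dvd.dvd.mul_left hdvdm 2
  intro x hx
  rw [nu_flip m w t hw ht hm hdvd A hx]
  have h3 := two_mu m w hw hdvdm
  by_cases hxt : x = t
  · rw [if_pos hxt]
    have := hbal t ht
    omega
  · rw [if_neg hxt]
    exact hbal x hx

lemma card_flip (m w t : ℕ) (hw : 0 < w) (ht : t < w) (hm : 0 < m) (hdvdm : w ∣ m)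
    (A : Finset (Fin (2*m))) (hbal : Bal m w A) (hA : A.card = m) :
    (flipC m w t A).card = m := by
  have hdvd : w ∣ 2*m := Dvd.dvd.mul_left hdvdm 2
  have hdisj : Disjoint (A \ Ct m w t) (Ct m w t \ A) := disjoint_sdiff_sdiff
  have h0 : (flipC m w t A).card = (A \ Ct m w t).card + (Ct m w t \ A).card := by
    unfold flipC
    exact Finset.card_union_of_disjoint hdisj
  have h1 := Finset.card_sdiff_add_card_inter A (Ct m w t)
  have h2 := Finset.card_sdiff_add_card_inter (Ct m w t) A
  rw [inter_ct] at h2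
  have h3 : A ∩ Ct m w t = Ct m w t ∩ A := Finset.inter_comm _ _
  rw [h3, inter_ct] at h1
  have h4 : (Ct m w t).card = 2*m/w := card_class m w hm hw hdvd ht
  have h5 : (A.filter (fun a => a.val % w = t)).card = m/w := hbal t ht
  have h6 := two_mu m w hw hdvdm
  have h7 : m/w ≤ m := Nat.div_le_self m w
  have hμ : w * (m/w) = m := Nat.mul_div_cancel' hdvdm
  have h8 : m/w ≤ m := by omega
  omega

lemma rep_parity_flip (m w t : ℕ) (hm : 0 < m) (ht : t < w) (hwm : w ≤ 2*m)
    (A : Finset (Fin (2*m))) :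
    Odd (rep m w (flipC m w t A)) ↔ ¬ Odd (rep m w A) := by
  have h2m : t < 2*m := lt_of_lt_of_le ht hwm
  set tp : Fin (2*m) := ⟨t, h2m⟩ with htp
  have hmemCt : ∀ a : Fin (2*m), a.val < w → (a ∈ Ct m w t ↔ a = tp) := by
    intro a hv
    simp only [Ct, Finset.mem_filter, Finset.mem_univ, true_and, Nat.mod_eq_of_lt hv]
    constructor
    · intro h
      exact Fin.ext h
    · intro h
      rw [h]
  by_cases hA : tp ∈ A
  · have key : (flipC m w t A).filter (fun a => a.val < w)
        = (A.filter (fun a => a.val < w)).erase tp := by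
      ext a
      simp only [Finset.mem_filter, mem_flip, Finset.mem_erase]
      constructor
      · rintro ⟨h1, hv⟩
        rcases h1 with ⟨haA, hC⟩ | ⟨hC, haA⟩
        · refine ⟨?_, haA, hv⟩
          intro he
          exact hC ((hmemCt a hv).2 he)
        · exact absurd (((hmemCt a hv).1 hC) ▸ hA) haA
      · rintro ⟨hne, haA, hv⟩
        exact ⟨Or.inl ⟨haA, fun hC => hne ((hmemCt a hv).1 hC)⟩, hv⟩
    have htpX : tp ∈ A.filter (fun a : Fin (2*m) => a.val < w) :=
      Finset.mem_filter.2 ⟨hA, ht⟩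
    have hpos : 0 < (A.filter (fun a : Fin (2*m) => a.val < w)).card :=
      Finset.card_pos.2 ⟨tp, htpX⟩
    unfold rep
    rw [key, Finset.card_erase_of_mem htpX, Nat.odd_iff, Nat.odd_iff]
    omega
  · have key : (flipC m w t A).filter (fun a => a.val < w)
        = insert tp (A.filter (fun a => a.val < w)) := by
      ext a
      simp only [Finset.mem_filter, mem_flip, Finset.mem_insert]
      constructor
      · rintro ⟨h1, hv⟩
        rcases h1 with ⟨haA, hC⟩ | ⟨hC, haA⟩
        · exact Or.inr ⟨haA, hv⟩
        · exact Or.inl ((hmemCt a hv).1 hC)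
      · rintro (rfl | ⟨haA, hv⟩)
        · exact ⟨Or.inr ⟨(hmemCt tp ht).2 rfl, hA⟩, ht⟩
        · exact ⟨Or.inl ⟨haA, fun hC => hA (((hmemCt a hv).1 hC) ▸ haA)⟩, hv⟩
    have htpX : tp ∉ A.filter (fun a : Fin (2*m) => a.val < w) :=
      fun h => hA (Finset.mem_filter.1 h).1
    unfold rep
    rw [key, Finset.card_insert_of_notMem htpX, Nat.odd_iff, Nat.odd_iff]
    omega

lemma col_flip (m w t : ℕ) (hm : 0 < m) (hw1 : 1 < w) (ht : t < w) (hdvdm : w ∣ m)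
    (A : Finset (Fin (2*m))) (hbal : Bal m w A) :
    col m w (flipC m w t A) = !(col m w A) := by
  have hw : 0 < w := by omega
  have hwm : w ≤ 2*m := le_trans (Nat.le_of_dvd hm hdvdm) (by omega)
  rw [col_bal m w hm hw hdvdm A hbal,
    col_bal m w hm hw hdvdm _ (bal_flip m w t hw ht hm hdvdm A hbal)]
  by_cases h : Odd (rep m w A)
  · have h2 : ¬ Odd (rep m w (flipC m w t A)) :=
      fun ho => (rep_parity_flip m w t hm ht hwm A).1 ho h
    simp [h, h2]
  · have h2 : Odd (rep m w (flipC m w t A)) := (rep_parity_flip m w t hm ht hwm A).2 h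
    simp [h, h2]

lemma succ_mod_ne {w : ℕ} (hw1 : 1 < w) {r : ℕ} (hr : r < w) : (r+1) % w ≠ r := by
  by_cases h : r + 1 = w
  · rw [h, Nat.mod_self]
    omega
  · rw [Nat.mod_eq_of_lt (by omega)]
    omega

/-! ### Counting: balanced part -/

lemma bal_count_eq (m w : ℕ) (hm : 0 < m) (hw1 : 1 < w) (hdvdm : w ∣ m) (i : Fin (2*m)) :
    (Finset.univ.filter (fun A : Finset (Fin (2*m)) =>
        (A.card = m ∧ i ∈ A ∧ col m w A = true) ∧ Bal m w A)).card =
    (Finset.univ.filter (fun A : Finset (Fin (2*m)) =>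
        (A.card = m ∧ i ∈ A ∧ col m w A = false) ∧ Bal m w A)).card := by
  have hw : 0 < w := by omega
  set r := i.val % w with hr
  have hrw : r < w := Nat.mod_lt _ hw
  set t := (r + 1) % w with htdef
  have ht : t < w := Nat.mod_lt _ hw
  have hnt : t ≠ r := succ_mod_ne hw1 hrw
  have hiCt : i ∉ Ct m w t := by
    simp only [Ct, Finset.mem_filter, Finset.mem_univ, true_and]
    intro h
    exact hnt (by rw [← h])
  have hmemi : ∀ A : Finset (Fin (2*m)), (i ∈ flipC m w t A ↔ i ∈ A) := by
    intro A
    rw [mem_flip]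
    constructor
    · rintro (⟨h1, _⟩ | ⟨h1, _⟩)
      · exact h1
      · exact absurd h1 hiCt
    · intro h
      exact Or.inl ⟨h, hiCt⟩
  have main : ∀ (b : Bool) (A : Finset (Fin (2*m))),
      A ∈ Finset.univ.filter (fun A : Finset (Fin (2*m)) =>
        (A.card = m ∧ i ∈ A ∧ col m w A = b) ∧ Bal m w A) →
      flipC m w t A ∈ Finset.univ.filter (fun A : Finset (Fin (2*m)) =>
        (A.card = m ∧ i ∈ A ∧ col m w A = !b) ∧ Bal m w A) := by
    intro b A hA
    simp only [Finset.mem_filter, Finset.mem_univ, true_and] at hA ⊢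
    obtain ⟨⟨hcard, hiA, hcol⟩, hbal⟩ := hA
    refine ⟨⟨card_flip m w t hw ht hm hdvdm A hbal hcard, (hmemi A).2 hiA, ?_⟩,
      bal_flip m w t hw ht hm hdvdm A hbal⟩
    rw [col_flip m w t hm hw1 ht hdvdm A hbal, hcol]
  refine Finset.card_bij' (fun A _ => flipC m w t A) (fun A _ => flipC m w t A) ?_ ?_ ?_ ?_
  · intro A hA
    exact main true A hA
  · intro A hA
    have := main false A hA
    simpa using this
  · intro A _
    exact flip_flip m w t A
  · intro A _
    exact flip_flip m w t A

/-! ### Counting: unbalanced part -/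

lemma nonbal_step (m w : ℕ) [NeZero (2*m)] (hm : 0 < m) (hw1 : 1 < w) (hodd : w % 2 = 1)
    (hdvdm : w ∣ m) (b : Bool) (i : Fin (2*m)) :
    (Finset.univ.filter (fun A : Finset (Fin (2*m)) =>
        (A.card = m ∧ i ∈ A ∧ col m w A = b) ∧ ¬ Bal m w A)).card =
    (Finset.univ.filter (fun A : Finset (Fin (2*m)) =>
        (A.card = m ∧ (i+1) ∈ A ∧ col m w A = b) ∧ ¬ Bal m w A)).card := by
  have hdvd : w ∣ 2*m := Dvd.dvd.mul_left hdvdm 2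
  refine Finset.card_bij (fun A _ => shift m A) ?_ ?_ ?_
  · intro A hA
    simp only [Finset.mem_filter, Finset.mem_univ, true_and] at hA ⊢
    obtain ⟨⟨hcard, hiA, hcol⟩, hnb⟩ := hA
    refine ⟨⟨?_, ?_, ?_⟩, ?_⟩
    · rw [card_shift]
      exact hcard
    · exact (mem_shift m A i).2 hiA
    · rw [col_shift m w hm hw1 hodd hdvdm A hnb]
      exact hcol
    · rw [bal_shift m w hm hw1 hdvd A]
      exact hnb
  · intro A1 _ A2 _ he
    have he' : A1.image (fun a => a + 1) = A2.image (fun a => a + 1) := he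
    exact Finset.image_injective (add_left_injective 1) he'
  · intro B hB
    simp only [Finset.mem_filter, Finset.mem_univ, true_and] at hB
    obtain ⟨⟨hcard, hiB, hcol⟩, hnb⟩ := hB
    have hsB : shift m (B.image (fun a => a - 1)) = B := by
      unfold shift
      rw [Finset.image_image]
      have hcomp : ((fun a : Fin (2*m) => a + 1) ∘ (fun a : Fin (2*m) => a - 1)) = id := by
        funext a
        simp [sub_add_cancel]
      rw [hcomp, Finset.image_id]
    have hnb' : ¬ Bal m w (B.image (fun a => a - 1)) := by
      intro hb
      apply hnb
      rw [← hsB]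
      exact (bal_shift m w hm hw1 hdvd _).2 hb
    refine ⟨B.image (fun a => a - 1), ?_, hsB⟩
    simp only [Finset.mem_filter, Finset.mem_univ, true_and]
    refine ⟨⟨?_, ?_, ?_⟩, hnb'⟩
    · rw [Finset.card_image_of_injective _ sub_left_injective]
      exact hcard
    · have h1 := mem_shift m (B.image (fun a => a - 1)) i
      rw [hsB] at h1
      exact h1.1 hiB
    · have h2 := col_shift m w hm hw1 hodd hdvdm _ hnb'
      rw [hsB] at h2
      rw [← h2]
      exact hcol

open Fin.NatCast in
lemma nonbal_const (m w : ℕ) [NeZero (2*m)] (hm : 0 < m) (hw1 : 1 < w) (hodd : w % 2 = 1)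
    (hdvdm : w ∣ m) (b : Bool) (i : Fin (2*m)) :
    (Finset.univ.filter (fun A : Finset (Fin (2*m)) =>
        (A.card = m ∧ i ∈ A ∧ col m w A = b) ∧ ¬ Bal m w A)).card =
    (Finset.univ.filter (fun A : Finset (Fin (2*m)) =>
        (A.card = m ∧ (0 : Fin (2*m)) ∈ A ∧ col m w A = b) ∧ ¬ Bal m w A)).card := by
  have key : ∀ k : ℕ, (Finset.univ.filter (fun A : Finset (Fin (2*m)) =>
        (A.card = m ∧ ((k : Fin (2*m))) ∈ A ∧ col m w A = b) ∧ ¬ Bal m w A)).card =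
      (Finset.univ.filter (fun A : Finset (Fin (2*m)) =>
        (A.card = m ∧ (0 : Fin (2*m)) ∈ A ∧ col m w A = b) ∧ ¬ Bal m w A)).card := by
    intro k
    induction k with
    | zero =>
      norm_num
    | succ k ih =>
      have e : ((k+1 : ℕ) : Fin (2*m)) = ((k : ℕ) : Fin (2*m)) + 1 := by
        push_cast
        ring
      rw [e, ← nonbal_step m w hm hw1 hodd hdvdm b ((k : ℕ) : Fin (2*m)), ih]
  have e2 : i = ((i.val : ℕ) : Fin (2*m)) := (Fin.cast_val_eq_self i).symm
  rw [e2]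
  exact key i.val

lemma T_card_eq (m w : ℕ) (hm : 0 < m) (hw1 : 1 < w) (hodd : w % 2 = 1) (hdvdm : w ∣ m) :
    (Finset.univ.filter (fun A : Finset (Fin (2*m)) =>
        (A.card = m ∧ col m w A = true) ∧ ¬ Bal m w A)).card =
    (Finset.univ.filter (fun A : Finset (Fin (2*m)) =>
        (A.card = m ∧ col m w A = false) ∧ ¬ Bal m w A)).card := by
  have hw : 0 < w := by omega
  have hcc : ∀ (b : Bool) (A : Finset (Fin (2*m))),
      A ∈ Finset.univ.filter (fun A : Finset (Fin (2*m)) =>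
        (A.card = m ∧ col m w A = b) ∧ ¬ Bal m w A) →
      Aᶜ ∈ Finset.univ.filter (fun A : Finset (Fin (2*m)) =>
        (A.card = m ∧ col m w A = !b) ∧ ¬ Bal m w A) := by
    intro b A hA
    simp only [Finset.mem_filter, Finset.mem_univ, true_and] at hA ⊢
    obtain ⟨⟨hcard, hcol⟩, hnb⟩ := hA
    refine ⟨⟨?_, ?_⟩, ?_⟩
    · rw [Finset.card_compl, hcard]
      simp
      omega
    · rw [col_compl m w hm hw1 hodd hdvdm A, hcol]
    · intro hb
      exact hnb ((bal_compl_iff m w hm hw hdvdm A).1 hb)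
  refine Finset.card_bij' (fun A _ => Aᶜ) (fun A _ => Aᶜ) ?_ ?_ ?_ ?_
  · intro A hA
    exact hcc true A hA
  · intro A hA
    have := hcc false A hA
    simpa using this
  · intro A _
    exact compl_compl A
  · intro A _
    exact compl_compl A

lemma nonbal_sum (m w : ℕ) (b : Bool) :
    ∑ j : Fin (2*m), (Finset.univ.filter (fun A : Finset (Fin (2*m)) =>
        (A.card = m ∧ j ∈ A ∧ col m w A = b) ∧ ¬ Bal m w A)).card
    = m * (Finset.univ.filter (fun A : Finset (Fin (2*m)) =>
        (A.card = m ∧ col m w A = b) ∧ ¬ Bal m w A)).card := by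
  set T := Finset.univ.filter (fun A : Finset (Fin (2*m)) =>
    (A.card = m ∧ col m w A = b) ∧ ¬ Bal m w A) with hT
  have e1 : ∀ j : Fin (2*m), (Finset.univ.filter (fun A : Finset (Fin (2*m)) =>
      (A.card = m ∧ j ∈ A ∧ col m w A = b) ∧ ¬ Bal m w A)).card
      = (T.filter (fun A => j ∈ A)).card := by
    intro j
    rw [hT, Finset.filter_filter]
    congr 1
    apply Finset.filter_congr
    intro A _
    constructor
    · rintro ⟨⟨h1, h2, h3⟩, h4⟩
      exact ⟨⟨⟨h1, h3⟩, h4⟩, h2⟩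
    · rintro ⟨⟨⟨h1, h3⟩, h4⟩, h2⟩
      exact ⟨⟨h1, h2, h3⟩, h4⟩
  rw [Finset.sum_congr rfl (fun j _ => e1 j)]
  have e2 : ∑ j : Fin (2*m), (T.filter (fun A => j ∈ A)).card = ∑ A ∈ T, A.card := by
    simp only [Finset.card_filter]
    rw [Finset.sum_comm]
    apply Finset.sum_congr rfl
    intro A _
    rw [Finset.sum_ite_mem, Finset.univ_inter, Finset.sum_const, smul_eq_mul, mul_one]
  rw [e2]
  have e3 : ∀ A ∈ T, A.card = m := by
    intro A hA
    rw [hT] at hA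
    simp only [Finset.mem_filter] at hA
    exact hA.2.1.1
  rw [Finset.sum_congr rfl e3, Finset.sum_const, smul_eq_mul, mul_comm]

lemma nonbal_count_eq (m w : ℕ) [NeZero (2*m)] (hm : 0 < m) (hw1 : 1 < w)
    (hodd : w % 2 = 1) (hdvdm : w ∣ m) (i : Fin (2*m)) :
    (Finset.univ.filter (fun A : Finset (Fin (2*m)) =>
        (A.card = m ∧ i ∈ A ∧ col m w A = true) ∧ ¬ Bal m w A)).card =
    (Finset.univ.filter (fun A : Finset (Fin (2*m)) =>
        (A.card = m ∧ i ∈ A ∧ col m w A = false) ∧ ¬ Bal m w A)).card := by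
  have hkey : ∀ b : Bool, 2*m * (Finset.univ.filter (fun A : Finset (Fin (2*m)) =>
      (A.card = m ∧ i ∈ A ∧ col m w A = b) ∧ ¬ Bal m w A)).card
      = m * (Finset.univ.filter (fun A : Finset (Fin (2*m)) =>
        (A.card = m ∧ col m w A = b) ∧ ¬ Bal m w A)).card := by
    intro b
    rw [← nonbal_sum m w b]
    have hconst : ∀ j : Fin (2*m), (Finset.univ.filter (fun A : Finset (Fin (2*m)) =>
        (A.card = m ∧ j ∈ A ∧ col m w A = b) ∧ ¬ Bal m w A)).card
        = (Finset.univ.filter (fun A : Finset (Fin (2*m)) =>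
        (A.card = m ∧ i ∈ A ∧ col m w A = b) ∧ ¬ Bal m w A)).card := by
      intro j
      rw [nonbal_const m w hm hw1 hodd hdvdm b j, nonbal_const m w hm hw1 hodd hdvdm b i]
    rw [Finset.sum_congr rfl (fun j _ => hconst j), Finset.sum_const, smul_eq_mul]
    congr 1
    simp
  have h1 := hkey true
  have h2 := hkey false
  have h3 := T_card_eq m w hm hw1 hodd hdvdm
  have h2m : 0 < 2*m := by omega
  have := h1.trans (by rw [h3, ← h2])
  exact Nat.eq_of_mul_eq_mul_left h2m this

end Stmt18Aux

open Stmt18Aux in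
theorem stmt_18 (m : ℕ) (hm : 2 ≤ m) (hnp : ¬ ∃ k : ℕ, m = 2 ^ k) :
    ∃ c : Finset (Fin (2 * m)) → Bool,
      (∀ A : Finset (Fin (2 * m)), A.card = m → c Aᶜ ≠ c A) ∧
      (∀ i : Fin (2 * m),
        (Finset.univ.filter
          (fun A : Finset (Fin (2 * m)) => A.card = m ∧ i ∈ A ∧ c A = true)).card =
        (Finset.univ.filter
          (fun A : Finset (Fin (2 * m)) => A.card = m ∧ i ∈ A ∧ c A = false)).card) := by
  have hm0 : m ≠ 0 := by omega
  set w := m / 2 ^ (m.factorization 2) with hwdef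
  have hdvdm : w ∣ m := Nat.ordCompl_dvd m 2
  have hw0 : 0 < w := Nat.ordCompl_pos 2 hm0
  have hnodd : ¬ 2 ∣ w := Nat.not_dvd_ordCompl Nat.prime_two hm0
  have hodd : w % 2 = 1 := by omega
  have hw1 : 1 < w := by
    by_contra h
    have hw1' : w = 1 := by omega
    have hsplit := Nat.ordProj_mul_ordCompl_eq_self m 2
    rw [← hwdef] at hsplit
    rw [hw1', mul_one] at hsplit
    exact hnp ⟨_, hsplit.symm⟩
  haveI : NeZero (2*m) := ⟨by omega⟩
  refine ⟨col m w, ?_, ?_⟩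
  · intro A _
    exact col_compl_ne m w (by omega) hw1 hodd hdvdm A
  · intro i
    have split : ∀ b : Bool,
        (Finset.univ.filter (fun A : Finset (Fin (2*m)) =>
          A.card = m ∧ i ∈ A ∧ col m w A = b)).card
        = (Finset.univ.filter (fun A : Finset (Fin (2*m)) =>
            (A.card = m ∧ i ∈ A ∧ col m w A = b) ∧ Bal m w A)).card
        + (Finset.univ.filter (fun A : Finset (Fin (2*m)) =>
            (A.card = m ∧ i ∈ A ∧ col m w A = b) ∧ ¬ Bal m w A)).card := by
      intro b
      have h1 : Finset.univ.filter (fun A : Finset (Fin (2*m)) =>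
            (A.card = m ∧ i ∈ A ∧ col m w A = b) ∧ Bal m w A)
          = (Finset.univ.filter (fun A : Finset (Fin (2*m)) =>
            A.card = m ∧ i ∈ A ∧ col m w A = b)).filter (fun A => Bal m w A) :=
        (Finset.filter_filter _ _ _).symm
      have h2 : Finset.univ.filter (fun A : Finset (Fin (2*m)) =>
            (A.card = m ∧ i ∈ A ∧ col m w A = b) ∧ ¬ Bal m w A)
          = (Finset.univ.filter (fun A : Finset (Fin (2*m)) =>
            A.card = m ∧ i ∈ A ∧ col m w A = b)).filter (fun A => ¬ Bal m w A) :=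
        (Finset.filter_filter _ _ _).symm
      rw [h1, h2, Finset.card_filter_add_card_filter_not]
    rw [split true, split false, bal_count_eq m w (by omega) hw1 hdvdm i,
      nonbal_count_eq m w (by omega) hw1 hodd hdvdm i]
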